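/- Let n ≥ 1 and let E be an n×n complex matrix that is diagonalizable with n pairwise distinct eigenvalues. If A is an n×n complex matrix with exp(A) = E, then every eigenvector of E is an eigenvector of A; moreover, if v is a common eigenvector with E v = μ v and A v = α v, then exp(α) = μ. Consequently A is diagonalizable in the same eigenbasis as E, with each eigenvalue of A a logarithm of the corresponding eigenvalue of E. -/

import Mathlib

open scoped Matrix

/-- Let `E = V (diagonal μ) V⁻¹` be diagonalizable with `n` pairwise distinct
eigenvalues, and let `A` satisfy `exp A = E` (matrix exponential). Then every eigenvector of
`E` is an eigenvector of `A`, the corresponding scalar eigenvalues satisfy `exp α = c`, and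
`A` is diagonalizable in the same eigenbasis with eigenvalues that are logarithms of the
corresponding eigenvalues of `E`. -/
theorem stmt5 (n : ℕ) (hn : 1 ≤ n) (E A V : Matrix (Fin n) (Fin n) ℂ) (μ : Fin n → ℂ)
    (hV : IsUnit V) (hμ : Function.Injective μ) (hE : E = V * Matrix.diagonal μ * V⁻¹)
    (hA : NormedSpace.exp A = E) :
    (∀ v : Fin n → ℂ, v ≠ 0 → ∀ c : ℂ, E *ᵥ v = c • v →
      ∃ α : ℂ, A *ᵥ v = α • v ∧ Complex.exp α = c) ∧
    (∃ α : Fin n → ℂ, A = V * Matrix.diagonal α * V⁻¹ ∧ ∀ i, Complex.exp (α i) = μ i) := by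
  have hdet : IsUnit V.det := (Matrix.isUnit_iff_isUnit_det V).mp hV
  have hVV : V * V⁻¹ = 1 := Matrix.mul_nonsing_inv V hdet
  have hVV' : V⁻¹ * V = 1 := Matrix.nonsing_inv_mul V hdet
  -- A commutes with E
  have hcomm : Commute A E := by
    rw [← hA]; exact (Commute.refl A).exp_right
  -- eigenvector structure: if E v = c v then diagonal μ acting on x = V⁻¹ v gives c x
  have key : ∀ (v : Fin n → ℂ) (c : ℂ), E *ᵥ v = c • v →
      ∀ k, μ k * (V⁻¹ *ᵥ v) k = c * (V⁻¹ *ᵥ v) k := by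
    intro v c hv k
    have h1 : Matrix.diagonal μ *ᵥ (V⁻¹ *ᵥ v) = c • (V⁻¹ *ᵥ v) := by
      have : V⁻¹ *ᵥ (E *ᵥ v) = V⁻¹ *ᵥ (c • v) := by rw [hv]
      rw [Matrix.mulVec_smul] at this
      rw [Matrix.mulVec_mulVec, hE] at this
      have he : V⁻¹ * (V * Matrix.diagonal μ * V⁻¹) = Matrix.diagonal μ * V⁻¹ := by
        rw [← Matrix.mul_assoc, ← Matrix.mul_assoc, hVV', Matrix.one_mul]
      rw [he, ← Matrix.mulVec_mulVec] at this
      exact this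
    have := congrFun h1 k
    rw [Matrix.mulVec_diagonal] at this
    simpa using this
  -- columns of V: w j = V *ᵥ e_j
  set w : Fin n → Fin n → ℂ := fun j => V *ᵥ Pi.single j 1 with hw
  have hVinvw : ∀ j, V⁻¹ *ᵥ w j = Pi.single j 1 := by
    intro j
    rw [hw, Matrix.mulVec_mulVec, hVV', Matrix.one_mulVec]
  have hdiagsingle : ∀ j, Matrix.diagonal μ *ᵥ Pi.single j 1 = μ j • (Pi.single j 1 : Fin n → ℂ) := by
    intro j
    funext i
    rw [Matrix.mulVec_diagonal]
    by_cases h : i = j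
    · subst h; simp
    · simp [Pi.single_eq_of_ne h]
  have hEw : ∀ j, E *ᵥ w j = μ j • w j := by
    intro j
    show E *ᵥ (V *ᵥ Pi.single j 1) = μ j • (V *ᵥ Pi.single j 1)
    rw [Matrix.mulVec_mulVec, hE, Matrix.mul_assoc (V * Matrix.diagonal μ) V⁻¹ V, hVV',
      Matrix.mul_one, ← Matrix.mulVec_mulVec, hdiagsingle, Matrix.mulVec_smul]
  -- A preserves each eigenline: A (w j) = α j • w j
  have hAw : ∀ j, A *ᵥ w j = ((V⁻¹ *ᵥ (A *ᵥ w j)) j) • w j := by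
    intro j
    set u := A *ᵥ w j with hu
    have hEu : E *ᵥ u = μ j • u := by
      rw [hu, Matrix.mulVec_mulVec, ← hcomm.eq, ← Matrix.mulVec_mulVec, hEw,
        Matrix.mulVec_smul]
    have hk := key u (μ j) hEu
    set x := V⁻¹ *ᵥ u with hx
    have hxval : x = (x j) • (Pi.single j 1 : Fin n → ℂ) := by
      funext k
      by_cases h : k = j
      · subst h; simp
      · have := hk k
        have hxk : x k = 0 := by
          by_contra hne
          exact h (hμ (mul_right_cancel₀ hne (by rw [hx] at this ⊢; exact this)))
        simp [hxk, Pi.single_eq_of_ne h]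
    have : u = V *ᵥ x := by
      rw [hx, Matrix.mulVec_mulVec, hVV, Matrix.one_mulVec]
    rw [this, hxval, Matrix.mulVec_smul]
    simp [hw]
  set α : Fin n → ℂ := fun j => (V⁻¹ *ᵥ (A *ᵥ w j)) j with hα
  -- A = V diag α V⁻¹
  have hAdiag : A = V * Matrix.diagonal α * V⁻¹ := by
    have hcol : ∀ j, (V⁻¹ * A * V) *ᵥ Pi.single j 1 = Matrix.diagonal α *ᵥ Pi.single j 1 := by
      intro j
      rw [← Matrix.mulVec_mulVec, ← Matrix.mulVec_mulVec]
      show V⁻¹ *ᵥ (A *ᵥ w j) = _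
      rw [hAw j, Matrix.mulVec_smul, hVinvw, Matrix.mulVec_single]
      funext i
      by_cases h : i = j
      · subst h; simp [hα]
      · simp [Matrix.diagonal_apply_ne _ h, Pi.single_eq_of_ne h]
    have hmat : V⁻¹ * A * V = Matrix.diagonal α := by
      ext i j
      have := congrFun (hcol j) i
      rw [Matrix.mulVec_single, Matrix.mulVec_single] at this
      simp [Matrix.diagonal_apply, Pi.single_apply] at this ⊢
      rw [this]
      split_ifs with h <;> simp [h]
    calc A = (V * V⁻¹) * A * (V * V⁻¹) := by rw [hVV]; simp [Matrix.mul_assoc]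
    _ = V * (V⁻¹ * A * V) * V⁻¹ := by simp only [Matrix.mul_assoc]
    _ = V * Matrix.diagonal α * V⁻¹ := by rw [hmat]
  -- exp α i = μ i
  have hexpα : ∀ i, Complex.exp (α i) = μ i := by
    have hEexp : NormedSpace.exp A = V * Matrix.diagonal (fun i => Complex.exp (α i)) * V⁻¹ := by
      rw [hAdiag, Matrix.exp_conj V _ hV, Matrix.exp_diagonal]
      congr 1
      congr 1
      funext i
      rw [Pi.exp_def, Complex.exp_eq_exp_ℂ]
    rw [hA, hE] at hEexp
    have : Matrix.diagonal μ = Matrix.diagonal (fun i => Complex.exp (α i)) := by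
      have h1 : V⁻¹ * (V * Matrix.diagonal μ * V⁻¹) * V
          = V⁻¹ * (V * Matrix.diagonal (fun i => Complex.exp (α i)) * V⁻¹) * V := by
        rw [hEexp]
      simp only [← Matrix.mul_assoc, hVV'] at h1
      simp only [Matrix.mul_assoc, hVV'] at h1
      simpa using h1
    intro i
    have := congrFun (congrFun this i) i
    simp [Matrix.diagonal_apply_eq] at this
    exact this.symm
  refine ⟨?_, α, hAdiag, hexpα⟩
  -- part 1
  intro v hv0 c hvc
  set x := V⁻¹ *ᵥ v with hx
  have hvx : v = V *ᵥ x := by rw [hx, Matrix.mulVec_mulVec, hVV, Matrix.one_mulVec]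
  have hx0 : x ≠ 0 := by
    intro h
    apply hv0
    rw [hvx, h, Matrix.mulVec_zero]
  obtain ⟨j, hj⟩ : ∃ j, x j ≠ 0 := by
    by_contra h
    push_neg at h
    exact hx0 (funext fun k => h k)
  have hk := key v c hvc
  have hμj : μ j = c := mul_right_cancel₀ hj (hk j)
  have hxval : x = (x j) • (Pi.single j 1 : Fin n → ℂ) := by
    funext k
    by_cases h : k = j
    · subst h; simp
    · have hxk : x k = 0 := by
        by_contra hne
        have := mul_right_cancel₀ hne (hk k)
        exact h (hμ (this.trans hμj.symm))
      simp [hxk, Pi.single_eq_of_ne h]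
  have hvw : v = (x j) • w j := by
    rw [hvx, hxval, Matrix.mulVec_smul]
    simp [hw]
  refine ⟨α j, ?_, hμj ▸ hexpα j⟩
  rw [hvw, Matrix.mulVec_smul, hAw j]
  exact smul_comm _ _ _
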